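/- Let h, g, σ, p > 0 with h > g. Then the function R(α) = log₂(1 + (1−α)·h·p/(α·h·p + σ²)) − log₂(1 + (1−α)·g·p/(α·g·p + σ²)) is monotonically nonincreasing on [0,1], and hence is maximized at α = 0. -/
import Mathlib


theorem stmt_5 (h g σ p : ℝ) (hh : 0 < h) (hg : 0 < g) (hσ : 0 < σ) (hp : 0 < p)
    (hgt : g < h)
    (R : ℝ → ℝ)
    (hR : ∀ α : ℝ, R α =
      Real.logb 2 (1 + (1 - α) * h * p / (α * h * p + σ^2))
      - Real.logb 2 (1 + (1 - α) * g * p / (α * g * p + σ^2))) :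
    AntitoneOn R (Set.Icc 0 1) ∧ ∀ α ∈ Set.Icc (0:ℝ) 1, R α ≤ R 0 := by
  have key : ∀ α : ℝ, 0 ≤ α → R α =
      Real.logb 2 (h*p+σ^2) - Real.logb 2 (α*h*p+σ^2)
      - Real.logb 2 (g*p+σ^2) + Real.logb 2 (α*g*p+σ^2) := by
    intro α hα
    have hd1 : (0:ℝ) < α*h*p+σ^2 := by positivity
    have hd2 : (0:ℝ) < α*g*p+σ^2 := by positivity
    have e1 : 1 + (1 - α) * h * p / (α * h * p + σ^2) = (h*p+σ^2)/(α*h*p+σ^2) := by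
      field_simp; ring
    have e2 : 1 + (1 - α) * g * p / (α * g * p + σ^2) = (g*p+σ^2)/(α*g*p+σ^2) := by
      field_simp; ring
    rw [hR, e1, e2, Real.logb_div (by positivity) hd1.ne',
      Real.logb_div (by positivity) hd2.ne']
    ring
  have anti : AntitoneOn R (Set.Icc 0 1) := by
    intro a ha b hb hab
    have ha0 := ha.1
    have hb0 := hb.1
    rw [key a ha0, key b hb0]
    have h1 : (0:ℝ) < a*h*p+σ^2 := by positivity
    have h2 : (0:ℝ) < a*g*p+σ^2 := by positivity
    have h3 : (0:ℝ) < b*h*p+σ^2 := by positivity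
    have h4 : (0:ℝ) < b*g*p+σ^2 := by positivity
    have hprod : (b*g*p+σ^2)*(a*h*p+σ^2) ≤ (a*g*p+σ^2)*(b*h*p+σ^2) := by
      nlinarith [sq_nonneg σ,
        mul_nonneg (mul_nonneg (sub_nonneg.2 hab) (sub_pos.2 hgt).le) (mul_pos hp (pow_pos hσ 2)).le]
    have hlog : Real.logb 2 ((b*g*p+σ^2)*(a*h*p+σ^2)) ≤
        Real.logb 2 ((a*g*p+σ^2)*(b*h*p+σ^2)) :=
      Real.logb_le_logb_of_le (b := 2) (by norm_num) (by positivity) hprod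
    rw [Real.logb_mul h4.ne' h1.ne', Real.logb_mul h2.ne' h3.ne'] at hlog
    linarith
  exact ⟨anti, fun α hα => anti (Set.left_mem_Icc.2 zero_le_one) hα hα.1⟩
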